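/- For every {0,…,T}-valued stopping time τ of the natural filtration of Y, the function F^τ(s) := E^λ_y[|X_{σ(τ ∧ s)} − Y_{τ ∧ s}|], s ∈ {0,…,T}, where σ(τ') := ρ^{Root} ∧ (T − τ'), is nondecreasing in s. -/

import Mathlib

open MeasureTheory ProbabilityTheory

noncomputable section

namespace SwitchingIdentities

variable {Ω : Type*} [MeasurableSpace Ω]

/-- The increment `ξ` has the fair `±1` law. -/
def FairSign (P : Measure Ω) (ξ : Ω → ℤ) : Prop :=
  P {ω | ξ ω = 1} = 1 / 2 ∧ P {ω | ξ ω = -1} = 1 / 2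

/-- `ξ` and `η` are the increment families of two independent simple symmetric random
walks on `ℤ`: all increments are measurable, fair `±1` coins, and the whole family
`(ξ₀, ξ₁, …, η₀, η₁, …)` is independent. -/
def IndepSSRWIncrements (P : Measure Ω) (ξ η : ℕ → Ω → ℤ) : Prop :=
  (∀ n, Measurable (ξ n)) ∧ (∀ n, Measurable (η n)) ∧
  (∀ n, FairSign P (ξ n)) ∧ (∀ n, FairSign P (η n)) ∧
  iIndepFun (β := fun _ : ℕ ⊕ ℕ => ℤ) (Sum.elim ξ η) P

/-- The random walk with increments `ξ` started at `x`. -/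
def walk (ξ : ℕ → Ω → ℤ) (x : ℤ) (t : ℕ) (ω : Ω) : ℤ :=
  x + ∑ i ∈ Finset.range t, ξ i ω

/-- A Root continuation set: if `(t,m) ∈ D` then `(s,m) ∈ D` for all `s < t`. -/
def IsRootCont {α : Type*} (D : Set (ℕ × α)) : Prop :=
  ∀ t m, (t, m) ∈ D → ∀ s, s < t → (s, m) ∈ D

/-- A Rost continuation set: if `(t,m) ∈ D` then `(s,m) ∈ D` for all `s > t`. -/
def IsRostCont {α : Type*} (D : Set (ℕ × α)) : Prop :=
  ∀ t m, (t, m) ∈ D → ∀ s, t < s → (s, m) ∈ D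

/-- `hit D Z ω = inf {t : (t, Z_t) ∉ D}` (junk value `0` if the walk never leaves `D`). -/
def hit {α : Type*} (D : Set (ℕ × α)) (Z : ℕ → Ω → α) (ω : Ω) : ℕ :=
  sInf {t | (t, Z t ω) ∉ D}

/-- `hitBy D Z n ω = inf {t : (t, Z_t) ∉ D} ∧ n` (equal to `n` if the walk never leaves `D`). -/
def hitBy {α : Type*} (D : Set (ℕ × α)) (Z : ℕ → Ω → α) (n : ℕ) (ω : Ω) : ℕ :=
  sInf ({t | (t, Z t ω) ∉ D} ∪ {n})

/-- `revHitBy D Z T ω = inf {t : (T − t, Z_t) ∉ D} ∧ T`, the exit time of the time-reversed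
space-time walk, capped at `T`. -/
def revHitBy {α : Type*} (D : Set (ℕ × α)) (Z : ℕ → Ω → α) (T : ℕ) (ω : Ω) : ℕ :=
  sInf ({t | (T - t, Z t ω) ∉ D} ∪ {T})

/-- The potential function `U_m(z) = −∑_x |z − x| m({x})` of a measure `m` on `ℤ`. -/
def potential (m : Measure ℤ) (z : ℤ) : ℝ :=
  -∑' w : ℤ, (|z - w| : ℤ) * (m {w}).toReal

/-- A measure on `ℤ` has a finite first moment. -/
def FiniteFirstMoment (m : Measure ℤ) : Prop :=
  Integrable (fun z : ℤ => (z : ℝ)) m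

/-- `τ` is a stopping time of the natural filtration of the process `Z`:
`{τ ≤ n} ∈ σ(Z_0, …, Z_n)` for every `n`. -/
def IsNatStopping {α : Type*} [MeasurableSpace α] (Z : ℕ → Ω → α) (τ : Ω → ℕ) : Prop :=
  ∀ n : ℕ,
    MeasurableSet[MeasurableSpace.comap (fun ω => (fun i : Fin (n + 1) => Z i ω)) inferInstance]
      {ω | τ ω ≤ n}

/-- The law `μ^{Root}` of `X_{ρ^{Root}}` where `X` has increments `ξ` and `X_0 ∼ λ`. -/
def muRoot (P : Measure Ω) (ξ : ℕ → Ω → ℤ) (D : Set (ℕ × ℤ)) (lam : Measure ℤ) : Measure ℤ :=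
  Measure.map (fun p : ℤ × Ω => walk ξ p.1 (hit D (walk ξ p.1) p.2) p.2) (lam.prod P)

/-- The law `μ^{Root}_T` of `X_{ρ^{Root} ∧ T}` where `X` has increments `ξ` and `X_0 ∼ λ`. -/
def muRootT (P : Measure Ω) (ξ : ℕ → Ω → ℤ) (D : Set (ℕ × ℤ)) (lam : Measure ℤ) (T : ℕ) :
    Measure ℤ :=
  Measure.map (fun p : ℤ × Ω => walk ξ p.1 (hitBy D (walk ξ p.1) T p.2) p.2) (lam.prod P)

section Auxiliary

/-! ### Elementary facts about `hitBy` -/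

lemma hitBy_le {α : Type*} (D : Set (ℕ × α)) (Z : ℕ → Ω → α) (n : ℕ) (ω : Ω) :
    hitBy D Z n ω ≤ n :=
  Nat.sInf_le (Set.mem_union_right _ rfl)

lemma hitBy_succ_eq {α : Type*} {D : Set (ℕ × α)} {Z : ℕ → Ω → α} {n : ℕ} {ω : Ω}
    (h : hitBy D Z (n + 1) ω = n + 1) : hitBy D Z n ω = n := by
  have hne : ({t | (t, Z t ω) ∉ D} ∪ {n} : Set ℕ).Nonempty := ⟨n, Set.mem_union_right _ rfl⟩
  have hmem : hitBy D Z n ω ∈ ({t | (t, Z t ω) ∉ D} ∪ {n} : Set ℕ) := Nat.sInf_mem hne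
  rcases hmem with hA | hn
  · exfalso
    have h1 : hitBy D Z (n + 1) ω ≤ hitBy D Z n ω :=
      Nat.sInf_le (Set.mem_union_left _ hA)
    have h2 : hitBy D Z n ω ≤ n := hitBy_le D Z n ω
    omega
  · exact Set.mem_singleton_iff.mp hn

lemma hitBy_succ_ne {α : Type*} {D : Set (ℕ × α)} {Z : ℕ → Ω → α} {n : ℕ} {ω : Ω}
    (h : hitBy D Z (n + 1) ω ≠ n + 1) : hitBy D Z (n + 1) ω = hitBy D Z n ω := by
  have hle1 : hitBy D Z (n + 1) ω ≤ n + 1 := hitBy_le D Z (n + 1) ω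
  have hne1 : ({t | (t, Z t ω) ∉ D} ∪ {n + 1} : Set ℕ).Nonempty :=
    ⟨n + 1, Set.mem_union_right _ rfl⟩
  have hne0 : ({t | (t, Z t ω) ∉ D} ∪ {n} : Set ℕ).Nonempty := ⟨n, Set.mem_union_right _ rfl⟩
  have hmem1 : hitBy D Z (n + 1) ω ∈ ({t | (t, Z t ω) ∉ D} ∪ {n + 1} : Set ℕ) :=
    Nat.sInf_mem hne1
  rcases hmem1 with hA | hn1
  · have h0le : hitBy D Z n ω ≤ hitBy D Z (n + 1) ω := Nat.sInf_le (Set.mem_union_left _ hA)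
    have hmem0 : hitBy D Z n ω ∈ ({t | (t, Z t ω) ∉ D} ∪ {n} : Set ℕ) := Nat.sInf_mem hne0
    rcases hmem0 with hA0 | hn0
    · have h1le : hitBy D Z (n + 1) ω ≤ hitBy D Z n ω :=
        Nat.sInf_le (Set.mem_union_left _ hA0)
      omega
    · have := Set.mem_singleton_iff.mp hn0
      omega
  · exact absurd (Set.mem_singleton_iff.mp hn1) h

lemma walk_hitBy_succ {ξ : ℕ → Ω → ℤ} (D : Set (ℕ × ℤ)) (x : ℤ) (n : ℕ) (ω : Ω) :
    walk ξ x (hitBy D (walk ξ x) (n + 1) ω) ω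
      = walk ξ x (hitBy D (walk ξ x) n ω) ω
        + (if hitBy D (walk ξ x) (n + 1) ω = n + 1 then ξ n ω else 0) := by
  by_cases hc : hitBy D (walk ξ x) (n + 1) ω = n + 1
  · rw [if_pos hc, hc, hitBy_succ_eq hc]
    show walk ξ x (n + 1) ω = walk ξ x n ω + ξ n ω
    unfold walk
    rw [Finset.sum_range_succ]
    ring
  · rw [if_neg hc, hitBy_succ_ne hc, add_zero]

/-! ### Measurability helpers -/

lemma measurable_nat_of_levels {γ : Type*} {m : MeasurableSpace γ} {f : γ → ℕ}
    (h : ∀ r, MeasurableSet[m] {ω | f ω ≤ r}) : Measurable[m] f := by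
  apply measurable_to_countable'
  intro r
  match r with
  | 0 =>
    have heq : f ⁻¹' {0} = {ω | f ω ≤ 0} := by ext ω; simp [Nat.le_zero]
    rw [heq]; exact h 0
  | (r + 1) =>
    have heq : f ⁻¹' {r + 1} = {ω | f ω ≤ r + 1} \ {ω | f ω ≤ r} := by
      ext ω
      simp only [Set.mem_preimage, Set.mem_singleton_iff, Set.mem_diff, Set.mem_setOf_eq]
      omega
    rw [heq]; exact (h _).diff (h _)

lemma measurable_hitBy {γ : Type*} {m : MeasurableSpace γ} (D : Set (ℕ × ℤ)) (Z : ℕ → γ → ℤ)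
    (n : ℕ) (hZ : ∀ u, u < n → Measurable[m] (Z u)) :
    Measurable[m] (fun ω => hitBy D Z n ω) := by
  apply measurable_nat_of_levels
  intro r
  by_cases hr : n ≤ r
  · have heq : {ω | hitBy D Z n ω ≤ r} = Set.univ := by
      ext ω
      simp only [Set.mem_setOf_eq, Set.mem_univ, iff_true]
      exact (hitBy_le D Z n ω).trans hr
    rw [heq]; exact MeasurableSet.univ
  · push_neg at hr
    have heq : {ω | hitBy D Z n ω ≤ r}
        = ⋃ u ∈ Set.Iio (r + 1), {ω | (u, Z u ω) ∉ D} := by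
      ext ω
      simp only [Set.mem_setOf_eq, Set.mem_iUnion, Set.mem_Iio, exists_prop]
      constructor
      · intro hle
        have hmem : hitBy D Z n ω ∈ ({t | (t, Z t ω) ∉ D} ∪ {n} : Set ℕ) :=
          Nat.sInf_mem ⟨n, Set.mem_union_right _ rfl⟩
        rcases hmem with hA | hn
        · exact ⟨hitBy D Z n ω, by omega, hA⟩
        · have h2 := Set.mem_singleton_iff.mp hn
          omega
      · rintro ⟨u, hu, hD'⟩
        have h1 : hitBy D Z n ω ≤ u := Nat.sInf_le (Set.mem_union_left _ hD')
        omega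
    rw [heq]
    refine MeasurableSet.biUnion (Set.to_countable _) (fun u hu => ?_)
    have hu' : u < n := by
      have h3 : u < r + 1 := Set.mem_Iio.mp hu
      omega
    exact (hZ u hu') (MeasurableSet.of_discrete (s := {z : ℤ | (u, z) ∉ D}))

lemma measurable_rand_time {γ : Type*} {m : MeasurableSpace γ} {N : γ → ℕ}
    (hN : Measurable[m] N) {n : ℕ} (hbd : ∀ ω, N ω ≤ n) {W : ℕ → γ → ℤ}
    (hW : ∀ u, u ≤ n → Measurable[m] (W u)) :
    Measurable[m] (fun ω => W (N ω) ω) := by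
  have heq : (fun ω => W (N ω) ω)
      = fun ω => ∑ r ∈ Finset.range (n + 1), if N ω = r then W r ω else 0 := by
    funext ω
    rw [Finset.sum_ite_eq]
    simp [Nat.lt_succ_iff.mpr (hbd ω)]
  rw [heq]
  refine Finset.measurable_sum _ (fun r hr => Measurable.ite ?_ (hW r ?_) measurable_const)
  · exact hN (MeasurableSet.of_discrete (s := ({r} : Set ℕ)))
  · simp only [Finset.mem_range] at hr
    omega

lemma measurable_tau {η : ℕ → Ω → ℤ} (hmη : ∀ n, Measurable (η n)) {y : ℤ} {τ : Ω → ℕ}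
    (hτ : IsNatStopping (walk η y) τ) : Measurable τ := by
  apply measurable_nat_of_levels
  intro r
  have hY : Measurable (fun ω => (fun i : Fin (r + 1) => walk η y i ω)) := by
    refine measurable_pi_lambda _ (fun i => ?_)
    unfold walk
    exact measurable_const.add (Finset.measurable_sum _ fun j _ => hmη j)
  exact hY.comap_le _ (hτ r)

/-! ### Independence helpers -/

lemma indep_mono {γ : Type*} {mγ : MeasurableSpace γ} {m₁ m₂ m₁' m₂' : MeasurableSpace γ}
    {μ : Measure γ} (h : ProbabilityTheory.Indep m₁ m₂ μ) (h1 : m₁' ≤ m₁) (h2 : m₂' ≤ m₂) :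
    ProbabilityTheory.Indep m₁' m₂' μ := by
  rw [ProbabilityTheory.Indep_iff] at h ⊢
  exact fun t1 t2 ht1 ht2 => h t1 t2 (h1 _ ht1) (h2 _ ht2)

lemma indepFun_of_measurable_le {γ : Type*} {mγ : MeasurableSpace γ} {μ : Measure γ}
    {β₁ β₂ δ₁ δ₂ : Type*} {mb1 : MeasurableSpace β₁} {mb2 : MeasurableSpace β₂}
    {md1 : MeasurableSpace δ₁} {md2 : MeasurableSpace δ₂}
    {B₁ : γ → β₁} {B₂ : γ → β₂} (h : IndepFun B₁ B₂ μ)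
    {f : γ → δ₁} {g : γ → δ₂}
    (hf : Measurable[MeasurableSpace.comap B₁ mb1] f)
    (hg : Measurable[MeasurableSpace.comap B₂ mb2] g) :
    IndepFun f g μ := by
  rw [ProbabilityTheory.indepFun_iff_measure_inter_preimage_eq_mul]
  intro s t hs ht
  obtain ⟨s', hs', hseq⟩ := hf hs
  obtain ⟨t', ht', hteq⟩ := hg ht
  rw [← hseq, ← hteq]
  exact h.measure_inter_preimage_eq_mul _ _ hs' ht'

/-! ### Averaging out an independent fair coin -/

lemma half_avg {P : Measure Ω} [IsProbabilityMeasure P] {lam : Measure ℤ}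
    [IsProbabilityMeasure lam] {χ : Ω → ℤ} (hχm : Measurable χ) {c : ℤ}
    (hc : P {ω | χ ω = c} = 1 / 2) {h : ℤ × Ω → ℝ} (hint : Integrable h (lam.prod P))
    (hindep : ∀ x : ℤ, IndepFun (fun ω => h (x, ω)) χ P) :
    ∫ p, (if χ p.2 = c then h p else 0) ∂(lam.prod P)
      = (1 / 2) * ∫ p, h p ∂(lam.prod P) := by
  classical
  have hset : MeasurableSet {ω | χ ω = c} := hχm (MeasurableSet.of_discrete (s := {c}))
  set ind : Ω → ℝ := fun ω => if χ ω = c then (1 : ℝ) else 0 with hind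
  have hindm : Measurable ind := Measurable.ite hset measurable_const measurable_const
  have hindint : Integrable ind P := by
    refine Integrable.mono' (integrable_const (1 : ℝ)) hindm.aestronglyMeasurable ?_
    filter_upwards with ω
    by_cases h' : χ ω = c <;> simp [ind, h']
  have hfeq : (fun p : ℤ × Ω => if χ p.2 = c then h p else 0)
      = fun p => ind p.2 * h p := by
    funext p
    by_cases h' : χ p.2 = c <;> simp [ind, h']
  have hindm2 : AEStronglyMeasurable (fun p : ℤ × Ω => ind p.2) (lam.prod P) :=
    (hindm.comp measurable_snd).aestronglyMeasurable
  have hFint : Integrable (fun p : ℤ × Ω => ind p.2 * h p) (lam.prod P) := by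
    refine Integrable.bdd_mul (c := 1) hint hindm2 ?_
    filter_upwards with p
    by_cases h' : χ p.2 = c <;> simp [ind, h']
  have hindval : ∫ ω, ind ω ∂P = 1 / 2 := by
    have heq2 : ind = Set.indicator {ω | χ ω = c} (fun _ => (1 : ℝ)) := by
      funext ω
      by_cases h' : χ ω = c <;> simp [ind, h', Set.indicator_apply]
    rw [heq2, integral_indicator_const _ hset, measureReal_def, hc]
    norm_num [ENNReal.toReal_div]
  rw [hfeq, integral_prod _ hFint, integral_prod _ hint]
  have hae : ∀ᵐ x ∂lam, ∫ ω, ind ω * h (x, ω) ∂P = (1 / 2) * ∫ ω, h (x, ω) ∂P := by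
    filter_upwards [hint.prod_right_ae] with x hx
    have hIF : IndepFun (fun ω => h (x, ω)) ind P :=
      (hindep x).comp measurable_id
        (Measurable.of_discrete (f := fun z : ℤ => if z = c then (1 : ℝ) else 0))
    have hmul := hIF.integral_mul_eq_mul_integral hx.aestronglyMeasurable hindint.aestronglyMeasurable
    calc ∫ ω, ind ω * h (x, ω) ∂P
        = ∫ ω, ((fun ω => h (x, ω)) * ind) ω ∂P := by
          congr 1; funext ω; simp [mul_comm]
      _ = (∫ ω, h (x, ω) ∂P) * ∫ ω, ind ω ∂P := hmul
      _ = (1 / 2) * ∫ ω, h (x, ω) ∂P := by rw [hindval]; ring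
  rw [integral_congr_ae hae, integral_const_mul]

end Auxiliary
set_option maxHeartbeats 1000000 in
lemma step_mono (P : Measure Ω) [IsProbabilityMeasure P] (ξ η : ℕ → Ω → ℤ)
    (h : IndepSSRWIncrements P ξ η) (D : Set (ℕ × ℤ))
    (lam : Measure ℤ) [IsProbabilityMeasure lam] (T : ℕ) (y : ℤ)
    (hUI : UniformIntegrable
      (fun (t : ℕ) (p : ℤ × Ω) => ((walk ξ p.1 (hitBy D (walk ξ p.1) t p.2) p.2 : ℤ) : ℝ))
      1 (lam.prod P))
    (τ : Ω → ℕ) (hτ : IsNatStopping (walk η y) τ) (hτT : ∀ ω, τ ω ≤ T)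
    (s : ℕ) (hs : s + 1 ≤ T) :
    ∫ p : ℤ × Ω, ((|walk ξ p.1 (hitBy D (walk ξ p.1) (T - min (τ p.2) s) p.2) p.2
        - walk η y (min (τ p.2) s) p.2| : ℤ) : ℝ) ∂(lam.prod P)
    ≤ ∫ p : ℤ × Ω, ((|walk ξ p.1 (hitBy D (walk ξ p.1) (T - min (τ p.2) (s+1)) p.2) p.2
        - walk η y (min (τ p.2) (s+1)) p.2| : ℤ) : ℝ) ∂(lam.prod P) := by
  classical
  obtain ⟨hmξ, hmη, hfξ, hfη, hind⟩ := h
  set t := T - s - 1 with ht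
  have htT : t + 1 = T - s := by omega
  set ρ : ℕ → ℤ × Ω → ℕ := fun n p => hitBy D (walk ξ p.1) n p.2 with hρ
  set XS : ℕ → ℤ × Ω → ℤ := fun n p => walk ξ p.1 (ρ n p) p.2 with hXS
  -- ambient measurability
  have hwalkm : ∀ u : ℕ, Measurable (fun p : ℤ × Ω => walk ξ p.1 u p.2) := by
    intro u
    unfold walk
    exact measurable_fst.add (Finset.measurable_sum _ fun i _ => (hmξ i).comp measurable_snd)
  have hwalkmη : ∀ u : ℕ, Measurable (fun ω : Ω => walk η y u ω) := by
    intro u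
    unfold walk
    exact measurable_const.add (Finset.measurable_sum _ fun i _ => hmη i)
  have hρm : ∀ n, Measurable (ρ n) := fun n =>
    measurable_hitBy D _ n (fun u _ => hwalkm u)
  have hXSm : ∀ n, Measurable (XS n) := fun n =>
    measurable_rand_time (hρm n) (fun p => hitBy_le D (walk ξ p.1) n p.2) (fun u _ => hwalkm u)
  have hτm : Measurable τ := measurable_tau hmη hτ
  -- integrability of stopped walks
  obtain ⟨hUIm, hUIunif, C, hUIC⟩ := hUI
  have hXSint : ∀ n, Integrable (fun p => (XS n p : ℝ)) (lam.prod P) := by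
    intro n
    refine memLp_one_iff_integrable.mp ⟨hUIm n, ?_⟩
    exact lt_of_le_of_lt (hUIC n) ENNReal.coe_lt_top
  -- master bound
  set B : ℤ × Ω → ℝ :=
    fun p => (∑ n ∈ Finset.range (T + 1), |(XS n p : ℝ)|) + (|(y : ℝ)| + T + 1) with hB
  have hBint : Integrable B (lam.prod P) :=
    Integrable.add (integrable_finset_sum _ fun n _ => (hXSint n).abs) (integrable_const _)
  have hBnonneg : ∀ p, 0 ≤ B p := by
    intro p
    have h1 : 0 ≤ ∑ n ∈ Finset.range (T + 1), |(XS n p : ℝ)| :=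
      Finset.sum_nonneg fun n _ => abs_nonneg _
    have h2 : (0:ℝ) ≤ |(y : ℝ)| + T + 1 := by positivity
    rw [hB]; dsimp only; linarith
  -- a.s. ±1 increments
  have hpm : ∀ (ζ : ℕ → Ω → ℤ), (∀ n, Measurable (ζ n)) → (∀ n, FairSign P (ζ n)) →
      ∀ᵐ ω ∂P, ∀ j : ℕ, ζ j ω = 1 ∨ ζ j ω = -1 := by
    intro ζ hm hf
    rw [ae_all_iff]
    intro j
    have hdisj : Disjoint {ω | ζ j ω = 1} {ω | ζ j ω = -1} := by
      rw [Set.disjoint_left]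
      intro ω h1 h2
      simp only [Set.mem_setOf_eq] at h1 h2
      omega
    have h1 : P ({ω | ζ j ω = 1} ∪ {ω | ζ j ω = -1}) = 1 := by
      rw [measure_union hdisj ((hm j) (MeasurableSet.of_discrete (s := ({-1} : Set ℤ)))),
        (hf j).1, (hf j).2]
      exact ENNReal.add_halves 1
    have hmeas : MeasurableSet ({ω | ζ j ω = 1} ∪ {ω | ζ j ω = -1}) :=
      ((hm j) (MeasurableSet.of_discrete (s := ({1} : Set ℤ)))).union
        ((hm j) (MeasurableSet.of_discrete (s := ({-1} : Set ℤ))))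
    have h0 : P ({ω | ζ j ω = 1} ∪ {ω | ζ j ω = -1})ᶜ = 0 :=
      (prob_compl_eq_zero_iff hmeas).mpr h1
    rw [ae_iff]
    convert h0 using 2
    ext ω
    simp
  have hlift : ∀ (Q : Ω → Prop), (∀ᵐ ω ∂P, Q ω) → ∀ᵐ p ∂(lam.prod P), Q p.2 := by
    intro Q hQ
    rw [ae_iff] at hQ ⊢
    have heq : {p : ℤ × Ω | ¬ Q p.2} = (Set.univ : Set ℤ) ×ˢ {ω | ¬ Q ω} := by
      ext p; simp
    rw [heq, Measure.prod_prod, hQ, mul_zero]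
  have hgoodη : ∀ᵐ p ∂(lam.prod P), ∀ j : ℕ, η j p.2 = 1 ∨ η j p.2 = -1 :=
    hlift _ (hpm η hmη hfη)
  have hgoodξ : ∀ᵐ p ∂(lam.prod P), ∀ j : ℕ, ξ j p.2 = 1 ∨ ξ j p.2 = -1 :=
    hlift _ (hpm ξ hmξ hfξ)
  -- Y bound
  have hYbound : ∀ (ω : Ω), (∀ j, η j ω = 1 ∨ η j ω = -1) → ∀ u : ℕ,
      |walk η y u ω| ≤ |y| + u := by
    intro ω hω u
    unfold walk
    calc |y + ∑ i ∈ Finset.range u, η i ω|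
        ≤ |y| + |∑ i ∈ Finset.range u, η i ω| := abs_add_le _ _
      _ ≤ |y| + u := by
          have h1 : |∑ i ∈ Finset.range u, η i ω| ≤ ∑ i ∈ Finset.range u, |η i ω| :=
            Finset.abs_sum_le_sum_abs _ _
          have h2 : ∀ i ∈ Finset.range u, |η i ω| = 1 := by
            intro i _
            rcases hω i with h' | h' <;> simp [h']
          rw [Finset.sum_congr rfl h2, Finset.sum_const, Finset.card_range] at h1
          simp only [nsmul_eq_mul, mul_one] at h1
          linarith
  -- key bound
  have key_bound : ∀ (p : ℤ × Ω), (∀ j, η j p.2 = 1 ∨ η j p.2 = -1) →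
      ∀ (n u : ℕ) (c : ℤ), n ≤ T → u ≤ T → |c| ≤ 1 →
      ((|XS n p - walk η y u p.2 + c| : ℤ) : ℝ) ≤ B p := by
    intro p hp n u c hn hu hc
    have hY := hYbound p.2 hp u
    have e1 : |XS n p - walk η y u p.2 + c| ≤ |XS n p| + (|y| + u) + 1 := by
      calc |XS n p - walk η y u p.2 + c|
          ≤ |XS n p - walk η y u p.2| + |c| := abs_add_le _ _
        _ = |XS n p + (- walk η y u p.2)| + |c| := by rw [sub_eq_add_neg]
        _ ≤ (|XS n p| + |(- walk η y u p.2)|) + |c| := by gcongr; exact abs_add_le _ _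
        _ = (|XS n p| + |walk η y u p.2|) + |c| := by rw [abs_neg]
        _ ≤ |XS n p| + (|y| + u) + 1 := by gcongr
    have e2 : ((|XS n p| : ℤ) : ℝ) ≤ ∑ n' ∈ Finset.range (T + 1), |(XS n' p : ℝ)| := by
      have hmem : n ∈ Finset.range (T + 1) := Finset.mem_range.mpr (by omega)
      have := Finset.single_le_sum (f := fun n' => |(XS n' p : ℝ)|)
        (fun i _ => abs_nonneg _) hmem
      calc ((|XS n p| : ℤ) : ℝ) = |(XS n p : ℝ)| := by push_cast; ring
        _ ≤ _ := this
    have e3 : ((|XS n p - walk η y u p.2 + c| : ℤ) : ℝ)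
        ≤ ((|XS n p| : ℤ) : ℝ) + (|(y : ℝ)| + u + 1) := by
      have : ((|XS n p - walk η y u p.2 + c| : ℤ) : ℝ) ≤ ((|XS n p| + (|y| + u) + 1 : ℤ) : ℝ) := by
        exact_mod_cast e1
      push_cast at this ⊢
      linarith
    have hu' : (u : ℝ) ≤ T := by exact_mod_cast Nat.cast_le.mpr hu
    rw [hB]; dsimp only
    linarith
  -- components
  set K : ℤ × Ω → ℝ := fun p =>
    if τ p.2 ≤ s then ((|XS (T - τ p.2) p - walk η y (τ p.2) p.2| : ℤ) : ℝ) else 0 with hK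
  set A1 : ℤ → ℤ × Ω → ℝ := fun c p =>
    if s < τ p.2 then ((|XS t p - walk η y s p.2 - c| : ℤ) : ℝ) else 0 with hA1
  set A2 : ℤ → ℤ × Ω → ℝ := fun c p =>
    if s < τ p.2 then
      ((|XS t p - walk η y s p.2 + (if ρ (t+1) p = t+1 then c else 0)| : ℤ) : ℝ) else 0 with hA2
  set R1 : ℤ × Ω → ℝ := fun p =>
    if s < τ p.2 then ((|XS (t+1) p - walk η y s p.2| : ℤ) : ℝ) else 0 with hR1
  set R2 : ℤ × Ω → ℝ := fun p =>
    if s < τ p.2 then ((|XS t p - walk η y (s+1) p.2| : ℤ) : ℝ) else 0 with hR2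
  -- measurability of components
  have habs : ∀ (v : ℤ × Ω → ℤ), Measurable v →
      Measurable (fun p => ((|v p| : ℤ) : ℝ)) := fun v hv =>
    (Measurable.of_discrete (f := fun z : ℤ => ((|z| : ℤ) : ℝ))).comp hv
  have hsetle : MeasurableSet {p : ℤ × Ω | τ p.2 ≤ s} :=
    (hτm.comp measurable_snd) (MeasurableSet.of_discrete (s := {u : ℕ | u ≤ s}))
  have hsetlt : MeasurableSet {p : ℤ × Ω | s < τ p.2} :=
    (hτm.comp measurable_snd) (MeasurableSet.of_discrete (s := {u : ℕ | s < u}))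
  have hmXSτ : Measurable (fun p : ℤ × Ω => XS (T - τ p.2) p) := by
    refine measurable_rand_time (N := fun p : ℤ × Ω => T - τ p.2) ?_ (n := T)
      (fun p => Nat.sub_le _ _) (fun u _ => hXSm u)
    exact (Measurable.of_discrete (f := fun u : ℕ => T - u)).comp (hτm.comp measurable_snd)
  have hmYτ : Measurable (fun p : ℤ × Ω => walk η y (τ p.2) p.2) := by
    refine measurable_rand_time (N := fun p : ℤ × Ω => τ p.2) (hτm.comp measurable_snd)
      (n := T) (fun p => hτT p.2) (fun u _ => (hwalkmη u).comp measurable_snd)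
  have hsub : ∀ (v w : ℤ × Ω → ℤ), Measurable v → Measurable w →
      Measurable (fun p => v p - w p) := fun v w hv hw =>
    (Measurable.of_discrete (f := fun q : ℤ × ℤ => q.1 - q.2)).comp (hv.prodMk hw)
  have hmK : Measurable K := by
    rw [hK]
    exact Measurable.ite hsetle (habs _ (hsub _ _ hmXSτ hmYτ)) measurable_const
  have hmA1 : ∀ c, Measurable (A1 c) := by
    intro c
    rw [hA1]
    refine Measurable.ite hsetlt (habs _ ?_) measurable_const
    exact hsub _ _ (hsub _ _ (hXSm t) ((hwalkmη s).comp measurable_snd))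
      measurable_const
  have hadd : ∀ (v w : ℤ × Ω → ℤ), Measurable v → Measurable w →
      Measurable (fun p => v p + w p) := fun v w hv hw =>
    (Measurable.of_discrete (f := fun q : ℤ × ℤ => q.1 + q.2)).comp (hv.prodMk hw)
  have hmA2 : ∀ c, Measurable (A2 c) := by
    intro c
    rw [hA2]
    refine Measurable.ite hsetlt (habs _ ?_) measurable_const
    refine hadd _ _ (hsub _ _ (hXSm t) ((hwalkmη s).comp measurable_snd)) ?_
    refine Measurable.ite ?_ measurable_const measurable_const
    exact (hρm (t+1)) (MeasurableSet.of_discrete (s := ({t+1} : Set ℕ)))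
  have hmR1 : Measurable R1 := by
    rw [hR1]
    exact Measurable.ite hsetlt
      (habs _ (hsub _ _ (hXSm (t+1)) ((hwalkmη s).comp measurable_snd))) measurable_const
  have hmR2 : Measurable R2 := by
    rw [hR2]
    exact Measurable.ite hsetlt
      (habs _ (hsub _ _ (hXSm t) ((hwalkmη (s+1)).comp measurable_snd))) measurable_const
  -- integrability of components
  have hdom : ∀ (f : ℤ × Ω → ℝ), Measurable f → (∀ᵐ p ∂(lam.prod P), ‖f p‖ ≤ B p) →
      Integrable f (lam.prod P) :=
    fun f hf hb => Integrable.mono' hBint hf.aestronglyMeasurable hb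
  have hnormite : ∀ (cond : Prop) [Decidable cond] (z : ℤ) (p : ℤ × Ω),
      (∀ j, η j p.2 = 1 ∨ η j p.2 = -1) →
      (cond → ((|z| : ℤ) : ℝ) ≤ B p) →
      ‖if cond then ((|z| : ℤ) : ℝ) else 0‖ ≤ B p := by
    intro cond _ z p hp hbd
    by_cases hcond : cond
    · rw [if_pos hcond, Real.norm_eq_abs, abs_of_nonneg (by positivity)]
      exact hbd hcond
    · rw [if_neg hcond, norm_zero]
      exact hBnonneg p
  have hKint : Integrable K (lam.prod P) := by
    refine hdom K hmK ?_
    filter_upwards [hgoodη] with p hp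
    rw [hK]; dsimp only
    refine hnormite _ _ p hp (fun _ => ?_)
    have := key_bound p hp (T - τ p.2) (τ p.2) 0 (by omega) (hτT p.2) (by simp)
    simpa using this
  have hA1int : ∀ c : ℤ, |c| ≤ 1 → Integrable (A1 c) (lam.prod P) := by
    intro c hc
    refine hdom _ (hmA1 c) ?_
    filter_upwards [hgoodη] with p hp
    rw [hA1]; dsimp only
    refine hnormite _ _ p hp (fun _ => ?_)
    have := key_bound p hp t s (-c) (by omega) (by omega) (by simpa using hc)
    have heq : XS t p - walk η y s p.2 + (-c) = XS t p - walk η y s p.2 - c := by ring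
    rwa [heq] at this
  have hA2int : ∀ c : ℤ, |c| ≤ 1 → Integrable (A2 c) (lam.prod P) := by
    intro c hc
    refine hdom _ (hmA2 c) ?_
    filter_upwards [hgoodη] with p hp
    rw [hA2]; dsimp only
    refine hnormite _ _ p hp (fun _ => ?_)
    refine key_bound p hp t s _ (by omega) (by omega) ?_
    by_cases h' : ρ (t+1) p = t+1 <;> simp [h', hc]
  have hR1int : Integrable R1 (lam.prod P) := by
    refine hdom _ hmR1 ?_
    filter_upwards [hgoodη] with p hp
    rw [hR1]; dsimp only
    refine hnormite _ _ p hp (fun _ => ?_)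
    have := key_bound p hp (t+1) s 0 (by omega) (by omega) (by simp)
    simpa using this
  have hR2int : Integrable R2 (lam.prod P) := by
    refine hdom _ hmR2 ?_
    filter_upwards [hgoodη] with p hp
    rw [hR2]; dsimp only
    refine hnormite _ _ p hp (fun _ => ?_)
    have := key_bound p hp t (s+1) 0 (by omega) (by omega) (by simp)
    simpa using this
  -- pointwise decompositions
  have hdecomp1 : (fun p : ℤ × Ω =>
      ((|walk ξ p.1 (hitBy D (walk ξ p.1) (T - min (τ p.2) s) p.2) p.2
        - walk η y (min (τ p.2) s) p.2| : ℤ) : ℝ)) = fun p => K p + R1 p := by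
    funext p
    by_cases hcase : τ p.2 ≤ s
    · have hmin : min (τ p.2) s = τ p.2 := min_eq_left hcase
      rw [hmin, hK, hR1]
      dsimp only
      rw [if_pos hcase, if_neg (not_lt.mpr hcase), add_zero]
    · push_neg at hcase
      have hmin : min (τ p.2) s = s := min_eq_right (le_of_lt hcase)
      rw [hmin, hK, hR1]
      dsimp only
      rw [if_neg (not_le.mpr hcase), if_pos hcase, zero_add]
      have hTs : T - s = t + 1 := by omega
      rw [hTs]
  have hdecomp2 : (fun p : ℤ × Ω =>
      ((|walk ξ p.1 (hitBy D (walk ξ p.1) (T - min (τ p.2) (s+1)) p.2) p.2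
        - walk η y (min (τ p.2) (s+1)) p.2| : ℤ) : ℝ)) = fun p => K p + R2 p := by
    funext p
    by_cases hcase : τ p.2 ≤ s
    · have hmin : min (τ p.2) (s+1) = τ p.2 := min_eq_left (by omega)
      rw [hmin, hK, hR2]
      dsimp only
      rw [if_pos hcase, if_neg (not_lt.mpr hcase), add_zero]
    · push_neg at hcase
      have hmin : min (τ p.2) (s+1) = s + 1 := min_eq_right (by omega)
      rw [hmin, hK, hR2]
      dsimp only
      rw [if_neg (not_le.mpr hcase), if_pos hcase, zero_add]
      have hTs : T - (s+1) = t := by omega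
      rw [hTs]
  rw [hdecomp1, hdecomp2, integral_add hKint hR1int, integral_add hKint hR2int]
  have main : ∫ p, R1 p ∂(lam.prod P) ≤ ∫ p, R2 p ∂(lam.prod P) := by
    -- independence infrastructure
    set J : Finset (ℕ ⊕ ℕ) :=
      ((Finset.range t).image Sum.inl) ∪ ((Finset.range s).image Sum.inr) with hJ
    have hmSum : ∀ i : ℕ ⊕ ℕ, Measurable (Sum.elim ξ η i) := by
      intro i
      cases i with
      | inl i => exact hmξ i
      | inr j => exact hmη j
    set BJ : Ω → ({x // x ∈ J} → ℤ) := fun ω i => Sum.elim ξ η i.1 ω with hBJ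
    set Bk1 : Ω → ({x // x ∈ ({Sum.inl t} : Finset (ℕ ⊕ ℕ))} → ℤ) :=
      fun ω i => Sum.elim ξ η i.1 ω with hBk1
    set Bk2 : Ω → ({x // x ∈ ({Sum.inr s} : Finset (ℕ ⊕ ℕ))} → ℤ) :=
      fun ω i => Sum.elim ξ η i.1 ω with hBk2
    have hBJm : Measurable[MeasurableSpace.comap BJ MeasurableSpace.pi] BJ := measurable_iff_comap_le.mpr le_rfl
    have hGξ : ∀ i, i < t → Measurable[MeasurableSpace.comap BJ MeasurableSpace.pi] (ξ i) := by
      intro i hi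
      have hmem : (Sum.inl i : ℕ ⊕ ℕ) ∈ J := by
        rw [hJ]
        exact Finset.mem_union_left _ (Finset.mem_image_of_mem _ (Finset.mem_range.mpr hi))
      exact (measurable_pi_apply (⟨Sum.inl i, hmem⟩ : {x // x ∈ J})).comp hBJm
    have hGη : ∀ j, j < s → Measurable[MeasurableSpace.comap BJ MeasurableSpace.pi] (η j) := by
      intro j hj
      have hmem : (Sum.inr j : ℕ ⊕ ℕ) ∈ J := by
        rw [hJ]
        exact Finset.mem_union_right _ (Finset.mem_image_of_mem _ (Finset.mem_range.mpr hj))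
      exact (measurable_pi_apply (⟨Sum.inr j, hmem⟩ : {x // x ∈ J})).comp hBJm
    have hGwalkξ : ∀ (x : ℤ) (u : ℕ), u ≤ t → Measurable[MeasurableSpace.comap BJ MeasurableSpace.pi] (walk ξ x u) := by
      intro x u hu
      unfold walk
      refine measurable_const.add (Finset.measurable_sum _ fun i hi => hGξ i ?_)
      simp only [Finset.mem_range] at hi
      omega
    have hGwalkη : ∀ u : ℕ, u ≤ s → Measurable[MeasurableSpace.comap BJ MeasurableSpace.pi] (walk η y u) := by
      intro u hu
      unfold walk
      refine measurable_const.add (Finset.measurable_sum _ fun j hj => hGη j ?_)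
      simp only [Finset.mem_range] at hj
      omega
    have hGρ : ∀ (x : ℤ) (n : ℕ), n ≤ t + 1 →
        Measurable[MeasurableSpace.comap BJ MeasurableSpace.pi] (fun ω => hitBy D (walk ξ x) n ω) :=
      fun x n hn => measurable_hitBy D _ n (fun u hu => hGwalkξ x u (by omega))
    have hGXS : ∀ x : ℤ, Measurable[MeasurableSpace.comap BJ MeasurableSpace.pi] (fun ω => walk ξ x (hitBy D (walk ξ x) t ω) ω) :=
      fun x => measurable_rand_time (hGρ x t (by omega))
        (fun ω => hitBy_le D (walk ξ x) t ω) (fun u hu => hGwalkξ x u hu)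
    have hGE : MeasurableSet[MeasurableSpace.comap BJ MeasurableSpace.pi] {ω | s < τ ω} := by
      have hle : MeasurableSpace.comap (fun ω => (fun i : Fin (s + 1) => walk η y i ω))
          MeasurableSpace.pi ≤ MeasurableSpace.comap BJ MeasurableSpace.pi := by
        have hpi : (MeasurableSpace.pi : MeasurableSpace (Fin (s + 1) → ℤ))
            = ⨆ i : Fin (s + 1), MeasurableSpace.comap (fun b => b i) inferInstance := rfl
        rw [hpi, MeasurableSpace.comap_iSup]
        refine iSup_le fun i => ?_
        rw [MeasurableSpace.comap_comp]
        exact Measurable.comap_le (hGwalkη i (Nat.lt_succ_iff.mp i.isLt))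
      have h1 : MeasurableSet[MeasurableSpace.comap BJ MeasurableSpace.pi] {ω | τ ω ≤ s} :=
        hle _ (hτ s)
      have h2 : {ω | s < τ ω} = {ω | τ ω ≤ s}ᶜ := by
        ext ω
        simp [not_le]
      rw [h2]
      exact h1.compl
    have hGsub : ∀ (v w : Ω → ℤ), Measurable[MeasurableSpace.comap BJ MeasurableSpace.pi] v → Measurable[MeasurableSpace.comap BJ MeasurableSpace.pi] w →
        Measurable[MeasurableSpace.comap BJ MeasurableSpace.pi] (fun ω => v ω - w ω) := fun v w hv hw =>
      (Measurable.of_discrete (f := fun q : ℤ × ℤ => q.1 - q.2)).comp (hv.prodMk hw)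
    have hGadd : ∀ (v w : Ω → ℤ), Measurable[MeasurableSpace.comap BJ MeasurableSpace.pi] v → Measurable[MeasurableSpace.comap BJ MeasurableSpace.pi] w →
        Measurable[MeasurableSpace.comap BJ MeasurableSpace.pi] (fun ω => v ω + w ω) := fun v w hv hw =>
      (Measurable.of_discrete (f := fun q : ℤ × ℤ => q.1 + q.2)).comp (hv.prodMk hw)
    have hGabs : ∀ (v : Ω → ℤ), Measurable[MeasurableSpace.comap BJ MeasurableSpace.pi] v →
        Measurable[MeasurableSpace.comap BJ MeasurableSpace.pi] (fun ω => ((|v ω| : ℤ) : ℝ)) := fun v hv =>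
      (Measurable.of_discrete (f := fun z : ℤ => ((|z| : ℤ) : ℝ))).comp hv
    have hGA1 : ∀ (c x : ℤ), Measurable[MeasurableSpace.comap BJ MeasurableSpace.pi] (fun ω => A1 c (x, ω)) := by
      intro c x
      simp only [hA1, hXS, hρ]
      refine Measurable.ite hGE (hGabs _ ?_) measurable_const
      exact hGsub _ _ (hGsub _ _ (hGXS x) (hGwalkη s le_rfl)) measurable_const
    have hGA2 : ∀ (c x : ℤ), Measurable[MeasurableSpace.comap BJ MeasurableSpace.pi] (fun ω => A2 c (x, ω)) := by
      intro c x
      simp only [hA2, hXS, hρ]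
      refine Measurable.ite hGE (hGabs _ ?_) measurable_const
      refine hGadd _ _ (hGsub _ _ (hGXS x) (hGwalkη s le_rfl)) ?_
      refine Measurable.ite ?_ measurable_const measurable_const
      exact (hGρ x (t+1) le_rfl) (MeasurableSet.of_discrete (s := ({t+1} : Set ℕ)))
    -- independence
    have hdisj1 : Disjoint J ({Sum.inl t} : Finset (ℕ ⊕ ℕ)) := by
      rw [Finset.disjoint_singleton_right, hJ]
      simp
    have hdisj2 : Disjoint J ({Sum.inr s} : Finset (ℕ ⊕ ℕ)) := by
      rw [Finset.disjoint_singleton_right, hJ]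
      simp
    have hIndep1 : IndepFun BJ Bk1 P := hind.indepFun_finset J {Sum.inl t} hdisj1 hmSum
    have hIndep2 : IndepFun BJ Bk2 P := hind.indepFun_finset J {Sum.inr s} hdisj2 hmSum
    have hb1 : Measurable[MeasurableSpace.comap Bk1 MeasurableSpace.pi] Bk1 :=
      measurable_iff_comap_le.mpr le_rfl
    have hb2 : Measurable[MeasurableSpace.comap Bk2 MeasurableSpace.pi] Bk2 :=
      measurable_iff_comap_le.mpr le_rfl
    have hχm1 : Measurable[MeasurableSpace.comap Bk1 MeasurableSpace.pi] (ξ t) :=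
      (measurable_pi_apply (⟨Sum.inl t, Finset.mem_singleton_self _⟩ :
        {x // x ∈ ({Sum.inl t} : Finset (ℕ ⊕ ℕ))})).comp hb1
    have hχm2 : Measurable[MeasurableSpace.comap Bk2 MeasurableSpace.pi] (η s) :=
      (measurable_pi_apply (⟨Sum.inr s, Finset.mem_singleton_self _⟩ :
        {x // x ∈ ({Sum.inr s} : Finset (ℕ ⊕ ℕ))})).comp hb2
    have hindepA1 : ∀ (c x : ℤ), IndepFun (fun ω => A1 c (x, ω)) (η s) P :=
      fun c x => indepFun_of_measurable_le hIndep2 (hGA1 c x) hχm2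
    have hindepA2 : ∀ (c x : ℤ), IndepFun (fun ω => A2 c (x, ω)) (ξ t) P :=
      fun c x => indepFun_of_measurable_le hIndep1 (hGA2 c x) hχm1
    -- a.e. splitting of R2 along the value of η s
    have hsplit2 : ∀ᵐ p ∂(lam.prod P), R2 p
        = (if η s p.2 = 1 then A1 1 p else 0) + (if η s p.2 = -1 then A1 (-1) p else 0) := by
      filter_upwards [hgoodη] with p hp
      have hYs : walk η y (s+1) p.2 = walk η y s p.2 + η s p.2 := by
        unfold walk
        rw [Finset.sum_range_succ]
        ring
      rcases hp s with h1 | h1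
      · rw [h1, if_pos rfl, if_neg (show ¬((1:ℤ) = -1) by norm_num), add_zero]
        rw [hR2, hA1]
        dsimp only
        by_cases hcond : s < τ p.2
        · rw [if_pos hcond, if_pos hcond, hYs, h1]
          have e : XS t p - (walk η y s p.2 + 1) = XS t p - walk η y s p.2 - 1 := by ring
          rw [e]
        · rw [if_neg hcond, if_neg hcond]
      · rw [h1, if_neg (show ¬((-1:ℤ) = 1) by norm_num), if_pos rfl, zero_add]
        rw [hR2, hA1]
        dsimp only
        by_cases hcond : s < τ p.2
        · rw [if_pos hcond, if_pos hcond, hYs, h1]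
          have e : XS t p - (walk η y s p.2 + (-1)) = XS t p - walk η y s p.2 - (-1) := by ring
          rw [e]
        · rw [if_neg hcond, if_neg hcond]
    -- a.e. splitting of R1 along the value of ξ t
    have hsplit1 : ∀ᵐ p ∂(lam.prod P), R1 p
        = (if ξ t p.2 = 1 then A2 1 p else 0) + (if ξ t p.2 = -1 then A2 (-1) p else 0) := by
      filter_upwards [hgoodξ] with p hp
      have hXstep : XS (t+1) p = XS t p + (if ρ (t+1) p = t+1 then ξ t p.2 else 0) :=
        walk_hitBy_succ D p.1 t p.2
      rcases hp t with h1 | h1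
      · rw [h1, if_pos rfl, if_neg (show ¬((1:ℤ) = -1) by norm_num), add_zero]
        rw [hR1, hA2]
        dsimp only
        by_cases hcond : s < τ p.2
        · rw [if_pos hcond, if_pos hcond, hXstep, h1]
          have e : XS t p + (if ρ (t+1) p = t+1 then (1:ℤ) else 0) - walk η y s p.2
              = XS t p - walk η y s p.2 + (if ρ (t+1) p = t+1 then (1:ℤ) else 0) := by ring
          rw [e]
        · rw [if_neg hcond, if_neg hcond]
      · rw [h1, if_neg (show ¬((-1:ℤ) = 1) by norm_num), if_pos rfl, zero_add]
        rw [hR1, hA2]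
        dsimp only
        by_cases hcond : s < τ p.2
        · rw [if_pos hcond, if_pos hcond, hXstep, h1]
          have e : XS t p + (if ρ (t+1) p = t+1 then (-1:ℤ) else 0) - walk η y s p.2
              = XS t p - walk η y s p.2 + (if ρ (t+1) p = t+1 then (-1:ℤ) else 0) := by ring
          rw [e]
        · rw [if_neg hcond, if_neg hcond]
    -- integrability of indicator products
    have hiteint : ∀ (χ : Ω → ℤ), Measurable χ → ∀ (c : ℤ) (g : ℤ × Ω → ℝ), Measurable g →
        Integrable g (lam.prod P) →
        Integrable (fun p : ℤ × Ω => if χ p.2 = c then g p else 0) (lam.prod P) := by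
      intro χ hχ c g hgm hgint
      refine Integrable.mono' hgint.abs (Measurable.aestronglyMeasurable ?_) ?_
      · exact Measurable.ite ((hχ.comp measurable_snd)
          (MeasurableSet.of_discrete (s := ({c} : Set ℤ)))) hgm measurable_const
      · filter_upwards with p
        by_cases h' : χ p.2 = c
        · rw [if_pos h', Real.norm_eq_abs]
        · rw [if_neg h', norm_zero]
          exact abs_nonneg _
    -- compute the two integrals by averaging out the coins
    have hI2 : ∫ p, R2 p ∂(lam.prod P)
        = (1/2) * ∫ p, A1 1 p ∂(lam.prod P) + (1/2) * ∫ p, A1 (-1) p ∂(lam.prod P) := by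
      rw [integral_congr_ae hsplit2,
        integral_add (hiteint _ (hmη s) 1 _ (hmA1 1) (hA1int 1 (by norm_num)))
          (hiteint _ (hmη s) (-1) _ (hmA1 (-1)) (hA1int (-1) (by norm_num))),
        half_avg (hmη s) (hfη s).1 (hA1int 1 (by norm_num)) (fun x => hindepA1 1 x),
        half_avg (hmη s) (hfη s).2 (hA1int (-1) (by norm_num)) (fun x => hindepA1 (-1) x)]
    have hI1 : ∫ p, R1 p ∂(lam.prod P)
        = (1/2) * ∫ p, A2 1 p ∂(lam.prod P) + (1/2) * ∫ p, A2 (-1) p ∂(lam.prod P) := by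
      rw [integral_congr_ae hsplit1,
        integral_add (hiteint _ (hmξ t) 1 _ (hmA2 1) (hA2int 1 (by norm_num)))
          (hiteint _ (hmξ t) (-1) _ (hmA2 (-1)) (hA2int (-1) (by norm_num))),
        half_avg (hmξ t) (hfξ t).1 (hA2int 1 (by norm_num)) (fun x => hindepA2 1 x),
        half_avg (hmξ t) (hfξ t).2 (hA2int (-1) (by norm_num)) (fun x => hindepA2 (-1) x)]
    rw [hI1, hI2]
    -- pointwise comparison
    have hptwise : ∀ p : ℤ × Ω, A2 1 p + A2 (-1) p ≤ A1 1 p + A1 (-1) p := by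
      intro p
      rw [hA1, hA2]
      dsimp only
      by_cases hcond : s < τ p.2
      · rw [if_pos hcond, if_pos hcond, if_pos hcond, if_pos hcond]
        set g : ℤ := XS t p - walk η y s p.2 with hg
        have hZineq : |g + (if ρ (t+1) p = t+1 then (1:ℤ) else 0)|
            + |g + (if ρ (t+1) p = t+1 then (-1:ℤ) else 0)| ≤ |g - 1| + |g - (-1)| := by
          by_cases hC : ρ (t+1) p = t+1
          · rw [if_pos hC, if_pos hC]
            have e1 : g + (-1) = g - 1 := by ring
            have e2 : g - (-1) = g + 1 := by ring
            rw [e1, e2]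
            omega
          · rw [if_neg hC, if_neg hC]
            have h2g : |g - 1 + (g + 1)| ≤ |g - 1| + |g + 1| := abs_add_le _ _
            have e3 : g - 1 + (g + 1) = 2 * g := by ring
            have e4 : |(2:ℤ) * g| = 2 * |g| := by
              rw [abs_mul]
              norm_num
            have e5 : g - (-1) = g + 1 := by ring
            rw [e3, e4] at h2g
            rw [e5]
            have e6 : g + 0 = g := by ring
            rw [e6]
            omega
        exact_mod_cast hZineq
      · rw [if_neg hcond, if_neg hcond, if_neg hcond, if_neg hcond]
    have hcomp : ∫ p, (A2 1 p + A2 (-1) p) ∂(lam.prod P)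
        ≤ ∫ p, (A1 1 p + A1 (-1) p) ∂(lam.prod P) :=
      integral_mono ((hA2int 1 (by norm_num)).add (hA2int (-1) (by norm_num)))
        ((hA1int 1 (by norm_num)).add (hA1int (-1) (by norm_num))) (fun p => hptwise p)
    rw [integral_add (hA2int 1 (by norm_num)) (hA2int (-1) (by norm_num)),
      integral_add (hA1int 1 (by norm_num)) (hA1int (-1) (by norm_num))] at hcomp
    linarith
  linarith
/-- for every `{0,…,T}`-valued stopping time `τ` of the natural filtration
of `Y`, the function `F^τ(s) = E^λ_y[|X_{σ(τ∧s)} − Y_{τ∧s}|]`, with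
`σ(τ') = ρ^{Root} ∧ (T − τ')`, is nondecreasing on `{0, …, T}`. -/
theorem interpolating_function_monotone
    (P : Measure Ω) [IsProbabilityMeasure P] (ξ η : ℕ → Ω → ℤ)
    (h : IndepSSRWIncrements P ξ η)
    (D : Set (ℕ × ℤ)) (hD : IsRootCont D)
    (lam : Measure ℤ) [IsProbabilityMeasure lam] (hlam : FiniteFirstMoment lam)
    (T : ℕ) (y : ℤ)
    (hUI : UniformIntegrable
      (fun (t : ℕ) (p : ℤ × Ω) => ((walk ξ p.1 (hitBy D (walk ξ p.1) t p.2) p.2 : ℤ) : ℝ))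
      1 (lam.prod P))
    (τ : Ω → ℕ) (hτ : IsNatStopping (walk η y) τ) (hτT : ∀ ω, τ ω ≤ T)
    (F : ℕ → ℝ)
    (hF : ∀ s, F s = ∫ p : ℤ × Ω,
      ((|walk ξ p.1 (hitBy D (walk ξ p.1) (T - min (τ p.2) s) p.2) p.2
        - walk η y (min (τ p.2) s) p.2| : ℤ) : ℝ) ∂(lam.prod P)) :
    ∀ s₁ s₂, s₁ ≤ s₂ → s₂ ≤ T → F s₁ ≤ F s₂ := by
  intro s₁ s₂ h12 h2T
  induction s₂, h12 using Nat.le_induction with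
  | base => exact le_refl _
  | succ n hn ih =>
    have hstep := step_mono P ξ η h D lam T y hUI τ hτ hτT n (by omega)
    have h1 : F s₁ ≤ F n := ih (by omega)
    calc F s₁ ≤ F n := h1
      _ ≤ F (n + 1) := by rw [hF n, hF (n + 1)]; exact hstep

end SwitchingIdentities
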